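/- Suppose κ > ℵ₂ and θ are regular cardinals with θ > ℵ₀, and ⟨S_α : α ∈ S^θ_κ⟩ is a sequence with S_α ⊆ α cofinal in α, |S_α| = θ, every β ∈ S_α of cofinality > θ, and such that for every club C ⊆ κ, {α ∈ S^θ_κ : ∃β < α, S_α \ β ⊆ C} contains a club intersected with S^θ_κ. Then one can construct a decreasing sequence ⟨E_n : n < ω⟩ of clubs of κ such that E_{n+1} is contained in the set of limit points of E_n, and for every α ∈ E_{n+1} ∩ S^θ_κ, E_n' (the limit points of E_n) contains a final segment of S_α. -/

import Mathlib

open Ordinal Set Cardinal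

/-- `C` is a club (closed unbounded) subset of the ordinal `κ`. -/
def IsClubIn (C : Set Ordinal) (κ : Ordinal) : Prop :=
  C ⊆ Set.Iio κ ∧ (∀ β < κ, ∃ γ ∈ C, β < γ) ∧
    (∀ α < κ, α ≠ 0 → (∀ β < α, ∃ γ ∈ C, β < γ ∧ γ < α) → α ∈ C)

/-- `S` is stationary in `κ`: it meets every club of `κ`. -/
def IsStationaryIn (S : Set Ordinal) (κ : Ordinal) : Prop :=
  ∀ C, IsClubIn C κ → (S ∩ C).Nonempty

/-- `S^θ_κ`, the set of ordinals below `κ` of cofinality `θ`. -/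
def cofSet (κ θ : Cardinal) : Set Ordinal :=
  {α | α < κ.ord ∧ α.cof = θ}

/-- `γ` is a limit point of `E`: `E ∩ γ` is unbounded in `γ > 0`. -/
def IsLimitPtOf (E : Set Ordinal) (γ : Ordinal) : Prop :=
  γ ≠ 0 ∧ ∀ β < γ, ∃ δ ∈ E, β < δ ∧ δ < γ

section aux
variable {κ : Ordinal.{0}} (hcof : Cardinal.aleph0 < κ.cof)

/-- choice function giving an element of E above x -/
lemma exists_above (E : Set Ordinal) (h2 : ∀ β < κ, ∃ γ ∈ E, β < γ) :
    ∀ x : Ordinal, ∃ y, x < κ → y ∈ E ∧ x < y := by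
  intro x
  by_cases h : x < κ
  · obtain ⟨y, hy, hxy⟩ := h2 x h
    exact ⟨y, fun _ => ⟨hy, hxy⟩⟩
  · exact ⟨0, fun h' => absurd h' h⟩

include hcof in
lemma exists_limitPt {E : Set Ordinal} (h1 : E ⊆ Set.Iio κ)
    (h2 : ∀ β < κ, ∃ γ ∈ E, β < γ) :
    ∀ β < κ, ∃ γ, β < γ ∧ γ < κ ∧ IsLimitPtOf E γ := by
  intro β hβ
  choose g hg using exists_above E h2
  let f : ℕ → Ordinal := fun n => Nat.rec (g β) (fun _ ih => g ih) n
  have hf0 : f 0 = g β := rfl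
  have hfs : ∀ n, f (n + 1) = g (f n) := fun n => rfl
  have key : ∀ n, f n ∈ E ∧ f n < f (n + 1) := by
    intro n
    induction n with
    | zero =>
      obtain ⟨hmem, _⟩ := hg β hβ
      rw [hf0] at *
      exact ⟨hmem, (hg _ (h1 hmem)).2⟩
    | succ n ih =>
      have hmem : f (n+1) ∈ E := (hg _ (h1 ih.1)).1
      exact ⟨hmem, (hg _ (h1 hmem)).2⟩
  have hmemE : ∀ n, f n ∈ E := fun n => (key n).1
  have hlt : ∀ n, f n < f (n + 1) := fun n => (key n).2
  have hfκ : ∀ n, f n < κ := fun n => h1 (hmemE n)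
  set γ := ⨆ n, f n with hγ
  have hγκ : γ < κ := by
    apply Ordinal.iSup_lt_of_lt_cof _ hfκ
    simpa using hcof
  have hnγ : ∀ n, f n < γ := fun n => (hlt n).trans_le (Ordinal.le_iSup f (n+1))
  have hβγ : β < γ := ((hg β hβ).2).trans_le (Ordinal.le_iSup f 0)
  refine ⟨γ, hβγ, hγκ, ?_, ?_⟩
  · exact fun h => by simp [h] at hβγ
  · intro δ hδ
    obtain ⟨n, hn⟩ := Ordinal.lt_iSup_iff.1 hδ
    exact ⟨f n, hmemE n, hn, hnγ n⟩

include hcof in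
lemma limitPts_club {E : Set Ordinal} (hE : IsClubIn E κ) :
    IsClubIn {γ ∈ Set.Iio κ | IsLimitPtOf E γ} κ := by
  obtain ⟨h1, h2, h3⟩ := hE
  refine ⟨fun x hx => hx.1, ?_, ?_⟩
  · intro β hβ
    obtain ⟨γ, hβγ, hγκ, hlim⟩ := exists_limitPt hcof h1 h2 β hβ
    exact ⟨γ, ⟨hγκ, hlim⟩, hβγ⟩
  · intro α hα hα0 hcl
    refine ⟨hα, hα0, ?_⟩
    intro β hβ
    obtain ⟨γ, ⟨_, _, hγlim⟩, hβγ, hγα⟩ := hcl β hβ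
    obtain ⟨δ, hδ, hβδ, hδγ⟩ := hγlim β hβγ
    exact ⟨δ, hδ, hβδ, hδγ.trans hγα⟩

lemma limitPts_subset {E : Set Ordinal} (hE : IsClubIn E κ) :
    {γ ∈ Set.Iio κ | IsLimitPtOf E γ} ⊆ E := by
  rintro γ ⟨hγκ, hγ0, hγ⟩
  exact hE.2.2 γ hγκ hγ0 hγ

include hcof in
lemma inter_club {C D : Set Ordinal} (hC : IsClubIn C κ) (hD : IsClubIn D κ) :
    IsClubIn (C ∩ D) κ := by
  obtain ⟨hC1, hC2, hC3⟩ := hC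
  obtain ⟨hD1, hD2, hD3⟩ := hD
  refine ⟨fun x hx => hC1 hx.1, ?_, ?_⟩
  · intro β hβ
    choose gC hgC using exists_above C hC2
    choose gD hgD using exists_above D hD2
    let f : ℕ → Ordinal := fun n =>
      Nat.rec (gC β) (fun m ih => if Even m then gD ih else gC ih) n
    have hfs : ∀ n, f (n + 1) = if Even n then gD (f n) else gC (f n) := fun n => rfl
    have key : ∀ n, f n < κ ∧ (Even n → f n ∈ C) ∧ (¬ Even n → f n ∈ D) ∧ f n < f (n + 1) := by
      intro n
      induction n with
      | zero =>
        have hm : f 0 ∈ C := (hgC β hβ).1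
        have hκ0 : f 0 < κ := hC1 hm
        refine ⟨hκ0, fun _ => hm, fun h => absurd Even.zero h, ?_⟩
        rw [hfs 0, if_pos Even.zero]
        exact (hgD _ hκ0).2
      | succ n ih =>
        obtain ⟨hκn, _, _, hmono⟩ := ih
        by_cases he : Even n
        · have hm : f (n+1) ∈ D := by rw [hfs n, if_pos he]; exact (hgD _ hκn).1
          have hκ1 : f (n+1) < κ := hD1 hm
          have hne : ¬ Even (n+1) := by simp [Nat.even_add_one, he]
          refine ⟨hκ1, fun h => absurd h hne, fun _ => hm, ?_⟩
          rw [hfs (n+1), if_neg hne]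
          exact (hgC _ hκ1).2
        · have hm : f (n+1) ∈ C := by rw [hfs n, if_neg he]; exact (hgC _ hκn).1
          have hκ1 : f (n+1) < κ := hC1 hm
          have hne : Even (n+1) := Nat.even_add_one.2 he
          refine ⟨hκ1, fun _ => hm, fun h => absurd hne h, ?_⟩
          rw [hfs (n+1), if_pos hne]
          exact (hgD _ hκ1).2
    have hfκ : ∀ n, f n < κ := fun n => (key n).1
    have hlt : ∀ n, f n < f (n + 1) := fun n => (key n).2.2.2
    have hmono : StrictMono f := strictMono_nat_of_lt_succ hlt
    set γ := ⨆ n, f n with hγ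
    have hγκ : γ < κ := by
      apply Ordinal.iSup_lt_of_lt_cof _ hfκ
      simpa using hcof
    have hnγ : ∀ n, f n < γ := fun n => (hlt n).trans_le (Ordinal.le_iSup f (n+1))
    have hβγ : β < γ := ((hgC β hβ).2).trans (hnγ 0)
    have hγ0 : γ ≠ 0 := fun h => (not_lt_zero (a := β)) (h ▸ hβγ)
    have hmemC : γ ∈ C := by
      apply hC3 γ hγκ hγ0
      intro δ hδ
      obtain ⟨n, hn⟩ := Ordinal.lt_iSup_iff.1 hδ
      refine ⟨f (2 * n), (key (2*n)).2.1 (even_two_mul n), ?_, hnγ _⟩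
      exact hn.trans_le (hmono.monotone (Nat.le_mul_of_pos_left n two_pos))
    have hmemD : γ ∈ D := by
      apply hD3 γ hγκ hγ0
      intro δ hδ
      obtain ⟨n, hn⟩ := Ordinal.lt_iSup_iff.1 hδ
      refine ⟨f (2 * n + 1), (key (2*n+1)).2.2.1 ?_, ?_, hnγ (2*n+1)⟩
      · simp [Nat.even_add_one, even_two_mul]
      · exact hn.trans_le (hmono.monotone (Nat.le_succ_of_le (Nat.le_mul_of_pos_left n two_pos)))
    exact ⟨γ, ⟨hmemC, hmemD⟩, hβγ⟩
  · intro α hα hα0 hcl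
    constructor
    · exact hC3 α hα hα0 fun β hβ => by
        obtain ⟨γ, hγ, h⟩ := hcl β hβ; exact ⟨γ, hγ.1, h⟩
    · exact hD3 α hα hα0 fun β hβ => by
        obtain ⟨γ, hγ, h⟩ := hcl β hβ; exact ⟨γ, hγ.2, h⟩

end aux

/-- Case 1 of the proof of Lemma 3: given a `◊*_club(κ,θ)`-sequence
with `θ` uncountable, one can build a decreasing `ω`-sequence of clubs `E n`, each
`E (n+1)` consisting of limit points of `E n`, such that for `α ∈ E (n+1) ∩ S^θ_κ`
the limit points of `E n` contain a final segment of `S_α`. -/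
theorem case_one_club_sequence (κ θ : Cardinal.{0}) (hκ : κ.IsRegular) (hθ : θ.IsRegular)
    (hκ2 : Cardinal.aleph 2 < κ) (hθκ : Order.succ θ < κ) (hθω : Cardinal.aleph0 < θ)
    (S : Ordinal.{0} → Set Ordinal.{0})
    (hsub : ∀ α ∈ cofSet κ θ, S α ⊆ Set.Iio α)
    (hcof : ∀ α ∈ cofSet κ θ, sSup (S α) = α)
    (hcard : ∀ α ∈ cofSet κ θ, #(S α) = Cardinal.lift.{1} θ)
    (hbig : ∀ α ∈ cofSet κ θ, ∀ β ∈ S α, θ < β.cof)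
    (hguess : ∀ C, IsClubIn C κ.ord →
      ∃ D, IsClubIn D κ.ord ∧
        D ∩ cofSet κ θ ⊆ {α' ∈ cofSet κ θ | ∃ β < α', ∀ γ ∈ S α', β ≤ γ → γ ∈ C}) :
    ∃ E : ℕ → Set Ordinal.{0},
      (∀ n, IsClubIn (E n) κ.ord) ∧
      (∀ n m, n ≤ m → E m ⊆ E n) ∧
      (∀ n, E (n + 1) ⊆ {γ | IsLimitPtOf (E n) γ}) ∧
      (∀ n, ∀ α ∈ E (n + 1) ∩ cofSet κ θ,
        ∃ β < α, ∀ γ ∈ S α, β ≤ γ → IsLimitPtOf (E n) γ) := by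
  have hωκ : Cardinal.aleph0 < κ := lt_of_le_of_lt (Cardinal.aleph0_le_aleph 2) hκ2
  have hcof0 : Cardinal.aleph0 < κ.ord.cof := by rw [hκ.cof_eq]; exact hωκ
  have hlim : Order.IsSuccLimit κ.ord := Cardinal.isSuccLimit_ord hωκ.le
  -- base club
  have club0 : IsClubIn (Set.Iio κ.ord) κ.ord := by
    refine ⟨le_refl _, fun β hβ => ⟨β + 1, hlim.succ_lt hβ, Order.lt_succ β⟩, fun α hα _ _ => hα⟩
  -- step
  have step : ∀ F : Set Ordinal, IsClubIn F κ.ord →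
      ∃ F₂, IsClubIn F₂ κ.ord ∧ F₂ ⊆ F ∧ F₂ ⊆ {γ | IsLimitPtOf F γ} ∧
        (∀ α ∈ F₂ ∩ cofSet κ θ, ∃ β < α, ∀ γ ∈ S α, β ≤ γ → IsLimitPtOf F γ) := by
    intro F hF
    set F' := {γ ∈ Set.Iio κ.ord | IsLimitPtOf F γ} with hF'
    have hF'club : IsClubIn F' κ.ord := limitPts_club hcof0 hF
    obtain ⟨D, hDclub, hDguess⟩ := hguess F' hF'club
    refine ⟨D ∩ F', inter_club hcof0 hDclub hF'club, ?_, ?_, ?_⟩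
    · exact fun x hx => limitPts_subset hF hx.2
    · exact fun x hx => hx.2.2
    · rintro α ⟨⟨hαD, hαF'⟩, hαcof⟩
      obtain ⟨_, β, hβα, hβ⟩ := hDguess ⟨hαD, hαcof⟩
      exact ⟨β, hβα, fun γ hγ hβγ => (hβ γ hγ hβγ).2⟩
  choose! G hG1 hG2 hG3 hG4 using step
  let E : ℕ → {s : Set Ordinal // IsClubIn s κ.ord} := fun n =>
    Nat.rec ⟨Set.Iio κ.ord, club0⟩ (fun _ p => ⟨G p.1, hG1 p.1 p.2⟩) n
  have hEs : ∀ n, (E (n + 1)).1 = G (E n).1 := fun n => rfl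
  refine ⟨fun n => (E n).1, fun n => (E n).2, ?_, ?_, ?_⟩
  · intro n m hnm
    induction hnm with
    | refl => exact subset_rfl
    | step h ih => exact fun x hx => ih (hG2 _ (E _).2 hx)
  · intro n
    exact hG3 _ (E n).2
  · intro n α hα
    exact hG4 _ (E n).2 α hα
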